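/- For spherical interpolation h(t) between z₀ and z₁ with angle θ satisfying 0 < θ ≤ π/2, one has min{‖z₀‖, ‖z₁‖} ≤ ‖h(t)‖ ≤ max{‖z₀‖, ‖z₁‖} for all t ∈ [0,1]. -/

import Mathlib

open Real

lemma slerp_norm_between_aux (N r₀ r₁ a b co : ℝ) (hr₀ : 0 < r₀) (hr₁ : 0 < r₁)
    (hN : 0 ≤ N) (ha : 0 ≤ a) (hb : 0 ≤ b) (hco : 0 ≤ co)
    (hid : a^2 + b^2 + 2*a*b*co = 1)
    (hnorm : N^2 = a^2*r₀^2 + b^2*r₁^2 + 2*a*b*(co*(r₀*r₁))) :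
    min r₀ r₁ ≤ N ∧ N ≤ max r₀ r₁ := by
  set m := min r₀ r₁ with hm_def
  set M := max r₀ r₁ with hM_def
  have hm0 : 0 < m := lt_min hr₀ hr₁
  have hM0 : 0 < M := lt_of_lt_of_le hr₀ (le_max_left _ _)
  have hm₀ : m ≤ r₀ := min_le_left _ _
  have hm₁ : m ≤ r₁ := min_le_right _ _
  have hM₀ : r₀ ≤ M := le_max_left _ _
  have hM₁ : r₁ ≤ M := le_max_right _ _
  have habc : 0 ≤ 2*a*b*co :=
    mul_nonneg (mul_nonneg (mul_nonneg (by norm_num : (0:ℝ) ≤ 2) ha) hb) hco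
  have e₀ : m^2 ≤ r₀^2 := by rw [sq, sq]; exact mul_le_mul hm₀ hm₀ hm0.le hr₀.le
  have e₁ : m^2 ≤ r₁^2 := by rw [sq, sq]; exact mul_le_mul hm₁ hm₁ hm0.le hr₁.le
  have f₀ : r₀^2 ≤ M^2 := by rw [sq, sq]; exact mul_le_mul hM₀ hM₀ hr₀.le hM0.le
  have f₁ : r₁^2 ≤ M^2 := by rw [sq, sq]; exact mul_le_mul hM₁ hM₁ hr₁.le hM0.le
  have emm : m^2 ≤ r₀*r₁ := by rw [sq]; exact mul_le_mul hm₀ hm₁ hm0.le hr₀.le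
  have fMM : r₀*r₁ ≤ M^2 := by rw [sq]; exact mul_le_mul hM₀ hM₁ hr₁.le hM0.le
  have H0l : 0 ≤ a^2*(r₀^2 - m^2) := mul_nonneg (sq_nonneg a) (by linarith)
  have H1l : 0 ≤ b^2*(r₁^2 - m^2) := mul_nonneg (sq_nonneg b) (by linarith)
  have H2l : 0 ≤ (2*a*b*co)*(r₀*r₁ - m^2) := mul_nonneg habc (by linarith)
  have H0h : 0 ≤ a^2*(M^2 - r₀^2) := mul_nonneg (sq_nonneg a) (by linarith)
  have H1h : 0 ≤ b^2*(M^2 - r₁^2) := mul_nonneg (sq_nonneg b) (by linarith)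
  have H2h : 0 ≤ (2*a*b*co)*(M^2 - r₀*r₁) := mul_nonneg habc (by linarith)
  have hlow : m^2 ≤ N^2 := by
    have hme : m^2 = m^2 * (a^2 + b^2 + 2*a*b*co) := by rw [hid]; ring
    rw [hnorm, hme]; nlinarith [H0l, H1l, H2l]
  have hhigh : N^2 ≤ M^2 := by
    have hMe : M^2 = M^2 * (a^2 + b^2 + 2*a*b*co) := by rw [hid]; ring
    rw [hnorm, hMe]; nlinarith [H0h, H1h, H2h]
  constructor
  · have h := Real.sqrt_le_sqrt hlow
    rwa [Real.sqrt_sq hm0.le, Real.sqrt_sq hN] at h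
  · have h := Real.sqrt_le_sqrt hhigh
    rwa [Real.sqrt_sq hN, Real.sqrt_sq hM0.le] at h

/-- For spherical interpolation `h(t)` between `z₀` and `z₁` with angle `θ` satisfying
`0 < θ ≤ π/2`, one has `min{‖z₀‖,‖z₁‖} ≤ ‖h(t)‖ ≤ max{‖z₀‖,‖z₁‖}` for all `t ∈ [0,1]`. -/
theorem slerp_norm_between (d : ℕ) (z₀ z₁ : EuclideanSpace ℝ (Fin d)) (θ : ℝ)
    (hz₀ : z₀ ≠ 0) (hz₁ : z₁ ≠ 0)
    (hθ : 0 < θ) (hθπ : θ ≤ π / 2)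
    (hcos : Real.cos θ = (inner ℝ z₀ z₁ : ℝ) / (‖z₀‖ * ‖z₁‖)) :
    ∀ t ∈ Set.Icc (0 : ℝ) 1,
      min ‖z₀‖ ‖z₁‖
          ≤ ‖(Real.sin ((1 - t) * θ) / Real.sin θ) • z₀
              + (Real.sin (t * θ) / Real.sin θ) • z₁‖
        ∧ ‖(Real.sin ((1 - t) * θ) / Real.sin θ) • z₀
              + (Real.sin (t * θ) / Real.sin θ) • z₁‖
          ≤ max ‖z₀‖ ‖z₁‖ := by
  intro t ht
  obtain ⟨ht0, ht1⟩ := ht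
  have hπ := Real.pi_pos
  have hr₀ : (0:ℝ) < ‖z₀‖ := norm_pos_iff.mpr hz₀
  have hr₁ : (0:ℝ) < ‖z₁‖ := norm_pos_iff.mpr hz₁
  have hθπ' : θ < π := lt_of_le_of_lt hθπ (by linarith)
  have hsθ : 0 < Real.sin θ := Real.sin_pos_of_pos_of_lt_pi hθ hθπ'
  have hcθ : 0 ≤ Real.cos θ := Real.cos_nonneg_of_mem_Icc ⟨by linarith, hθπ⟩
  set a := Real.sin ((1-t)*θ) / Real.sin θ with ha_def
  set b := Real.sin (t*θ) / Real.sin θ with hb_def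
  have hs1 : 0 ≤ Real.sin ((1-t)*θ) :=
    Real.sin_nonneg_of_nonneg_of_le_pi (by nlinarith) (by nlinarith)
  have hs2 : 0 ≤ Real.sin (t*θ) :=
    Real.sin_nonneg_of_nonneg_of_le_pi (by nlinarith) (by nlinarith)
  have ha : 0 ≤ a := div_nonneg hs1 hsθ.le
  have hb : 0 ≤ b := div_nonneg hs2 hsθ.le
  have hinner : (inner ℝ z₀ z₁ : ℝ) = Real.cos θ * (‖z₀‖ * ‖z₁‖) := by
    rw [hcos]; field_simp
  have hsum : Real.sin θ
      = Real.sin ((1-t)*θ) * Real.cos (t*θ) + Real.cos ((1-t)*θ) * Real.sin (t*θ) := by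
    rw [← Real.sin_add]; ring_nf
  have hcsum : Real.cos θ
      = Real.cos ((1-t)*θ) * Real.cos (t*θ) - Real.sin ((1-t)*θ) * Real.sin (t*θ) := by
    rw [← Real.cos_add]; ring_nf
  have h1 := Real.sin_sq_add_cos_sq ((1-t)*θ)
  have h2 := Real.sin_sq_add_cos_sq (t*θ)
  have key : Real.sin ((1-t)*θ)^2 + Real.sin (t*θ)^2
      + 2 * Real.sin ((1-t)*θ) * Real.sin (t*θ) * Real.cos θ = Real.sin θ^2 := by
    rw [hsum, hcsum]
    linear_combination (-Real.sin ((1-t)*θ)^2) * h2 + (-Real.sin (t*θ)^2) * h1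
  have hS : Real.sin θ ≠ 0 := ne_of_gt hsθ
  have hid : a^2 + b^2 + 2*a*b*Real.cos θ = 1 := by
    rw [ha_def, hb_def]
    field_simp
    linear_combination key
  have hnorm : ‖a • z₀ + b • z₁‖^2
      = a^2*‖z₀‖^2 + b^2*‖z₁‖^2 + 2*a*b*(Real.cos θ * (‖z₀‖*‖z₁‖)) := by
    rw [norm_add_sq_real, real_inner_smul_left, real_inner_smul_right, norm_smul, norm_smul,
      hinner]
    simp [abs_of_nonneg ha, abs_of_nonneg hb]
    ring
  exact slerp_norm_between_aux _ _ _ _ _ _ hr₀ hr₁ (norm_nonneg _) ha hb hcθ hid hnorm
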